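/- For the Lax pair (L, B) of the KM system (L the symmetric matrix with diagonal entries u_1, u_1+u_2, u_2+u_3, …, u_{2n-2}+u_{2n-1}, u_{2n-1} and entries √(u_i u_{i+1}) in positions (i, i+2) and (i+2, i); B the skew-symmetric matrix with entries (1/2)√(u_i u_{i+1}) in position (i, i+2) and -(1/2)√(u_i u_{i+1}) in position (i+2, i)), if u_i(t) > 0 solve u̇_i = u_i(u_{i+1} - u_{i-1}) with u_0 = u_{2n} = 0, then dL/dt = BL - LB. -/

import Mathlib

/-- The Lax matrix `L` of the KM system: diagonal entries `u_{a-1} + u_a`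
(1-based index `a`, so with `u₀ = u_{2n} = 0` the diagonal is
`u₁, u₁+u₂, …, u_{2n-2}+u_{2n-1}, u_{2n-1}`), and entries `√(uₐ u_{a+1})`
in positions `(a, a+2)` and `(a+2, a)`. -/
noncomputable def kmLaxL (n : ℕ) (u : ℕ → ℝ) : Matrix (Fin (2 * n)) (Fin (2 * n)) ℝ :=
  Matrix.of fun i j =>
    if i = j then u i.1 + u (i.1 + 1)
    else if j.1 = i.1 + 2 then Real.sqrt (u (i.1 + 1) * u (i.1 + 2))
    else if i.1 = j.1 + 2 then Real.sqrt (u (j.1 + 1) * u (j.1 + 2))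
    else 0

/-- The skew-symmetric matrix `B` of the Lax pair: entries `(1/2)√(uₐ u_{a+1})`
in position `(a, a+2)` and `-(1/2)√(uₐ u_{a+1})` in position `(a+2, a)`. -/
noncomputable def kmLaxB (n : ℕ) (u : ℕ → ℝ) : Matrix (Fin (2 * n)) (Fin (2 * n)) ℝ :=
  Matrix.of fun i j =>
    if j.1 = i.1 + 2 then (1 / 2) * Real.sqrt (u (i.1 + 1) * u (i.1 + 2))
    else if i.1 = j.1 + 2 then -((1 / 2) * Real.sqrt (u (j.1 + 1) * u (j.1 + 2)))
    else 0

/-- If `uᵢ(t) > 0` solve the KM system `u̇ᵢ = uᵢ(uᵢ₊₁ - uᵢ₋₁)` with `u₀ = u_{2n} = 0`,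
then the Lax equation `dL/dt = BL - LB` holds (entrywise). -/
lemma sum_single_nat {m : ℕ} (a : ℕ) (f : Fin m → ℝ)
    (hf : ∀ k : Fin m, (k : ℕ) ≠ a → f k = 0) :
    ∑ k, f k = if h : a < m then f ⟨a, h⟩ else 0 := by
  split
  · rename_i h
    refine Finset.sum_eq_single ⟨a, h⟩ (fun k _ hk => hf k ?_) (fun hh => absurd (Finset.mem_univ _) hh)
    exact fun h2 => hk (Fin.ext h2)
  · exact Finset.sum_eq_zero fun k _ => hf k (by omega)

lemma kmBL (n : ℕ) (v : ℕ → ℝ) (i j : Fin (2 * n)) :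
    (kmLaxB n v * kmLaxL n v) i j =
      (if h : i.1 + 2 < 2 * n then
        (1 / 2) * Real.sqrt (v (i.1 + 1) * v (i.1 + 2)) * kmLaxL n v ⟨i.1 + 2, h⟩ j else 0)
      + (if _ : 2 ≤ i.1 then
        -((1 / 2) * Real.sqrt (v (i.1 - 1) * v i.1)) * kmLaxL n v ⟨i.1 - 2, by omega⟩ j else 0) := by
  rw [Matrix.mul_apply]
  have key : ∀ k : Fin (2 * n), kmLaxB n v i k * kmLaxL n v k j =
      (if (k : ℕ) = i.1 + 2 then
        (1 / 2) * Real.sqrt (v (i.1 + 1) * v (i.1 + 2)) * kmLaxL n v k j else 0)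
      + (if i.1 = (k : ℕ) + 2 then
        -((1 / 2) * Real.sqrt (v (k.1 + 1) * v (k.1 + 2))) * kmLaxL n v k j else 0) := by
    intro k
    simp only [kmLaxB, Matrix.of_apply]
    split_ifs <;> first | omega | ring
  simp only [key, Finset.sum_add_distrib]
  rw [sum_single_nat (i.1 + 2) _ (fun k hk => by rw [if_neg hk]),
      sum_single_nat (i.1 - 2) _ (fun k hk => by rw [if_neg (by omega)])]
  have hi := i.2
  congr 1
  · by_cases h : i.1 + 2 < 2 * n
    · rw [dif_pos h, dif_pos h, if_pos rfl]
    · rw [dif_neg h, dif_neg h]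
  · rcases Nat.lt_or_ge i.1 2 with h2 | h2
    · rw [dif_pos (by omega : i.1 - 2 < 2 * n), if_neg (by omega), dif_neg (by omega)]
    · have e1 : i.1 - 2 + 1 = i.1 - 1 := by omega
      have e2 : i.1 - 2 + 2 = i.1 := by omega
      rw [dif_pos (by omega : i.1 - 2 < 2 * n), if_pos (by omega : i.1 = i.1 - 2 + 2),
        dif_pos h2]
      simp only [e1, e2]

lemma kmLB (n : ℕ) (v : ℕ → ℝ) (i j : Fin (2 * n)) :
    (kmLaxL n v * kmLaxB n v) i j =
      (if _ : 2 ≤ j.1 then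
        (1 / 2) * Real.sqrt (v (j.1 - 1) * v j.1) * kmLaxL n v i ⟨j.1 - 2, by omega⟩ else 0)
      + (if h : j.1 + 2 < 2 * n then
        -((1 / 2) * Real.sqrt (v (j.1 + 1) * v (j.1 + 2))) * kmLaxL n v i ⟨j.1 + 2, h⟩ else 0) := by
  rw [Matrix.mul_apply]
  have key : ∀ k : Fin (2 * n), kmLaxL n v i k * kmLaxB n v k j =
      (if j.1 = (k : ℕ) + 2 then
        (1 / 2) * Real.sqrt (v (k.1 + 1) * v (k.1 + 2)) * kmLaxL n v i k else 0)
      + (if (k : ℕ) = j.1 + 2 then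
        -((1 / 2) * Real.sqrt (v (j.1 + 1) * v (j.1 + 2))) * kmLaxL n v i k else 0) := by
    intro k
    simp only [kmLaxB, Matrix.of_apply]
    split_ifs <;> first | omega | ring
  simp only [key, Finset.sum_add_distrib]
  rw [sum_single_nat (j.1 - 2) _ (fun k hk => by rw [if_neg (by omega)]),
      sum_single_nat (j.1 + 2) _ (fun k hk => by rw [if_neg hk])]
  have hj := j.2
  congr 1
  · rcases Nat.lt_or_ge j.1 2 with h2 | h2
    · rw [dif_pos (by omega : j.1 - 2 < 2 * n), if_neg (by omega), dif_neg (by omega)]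
    · have e1 : j.1 - 2 + 1 = j.1 - 1 := by omega
      have e2 : j.1 - 2 + 2 = j.1 := by omega
      rw [dif_pos (by omega : j.1 - 2 < 2 * n), if_pos (by omega : j.1 = j.1 - 2 + 2),
        dif_pos h2]
      simp only [e1, e2]
  · by_cases h : j.1 + 2 < 2 * n
    · rw [dif_pos h, dif_pos h, if_pos rfl]
    · rw [dif_neg h, dif_neg h]

lemma hderiv_u (n : ℕ) (u : ℝ → ℕ → ℝ)
    (hu0 : ∀ t, u t 0 = 0) (hu2n : ∀ t, u t (2 * n) = 0)
    (hode : ∀ t : ℝ, ∀ i ∈ Finset.Icc 1 (2 * n - 1),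
      HasDerivAt (fun s => u s i) (u t i * (u t (i + 1) - u t (i - 1))) t)
    (t : ℝ) (m : ℕ) (hm : m ≤ 2 * n) :
    HasDerivAt (fun s => u s m)
      (if 1 ≤ m ∧ m ≤ 2 * n - 1 then u t m * (u t (m + 1) - u t (m - 1)) else 0) t := by
  by_cases h : 1 ≤ m ∧ m ≤ 2 * n - 1
  · rw [if_pos h]; exact hode t m (Finset.mem_Icc.mpr h)
  · rw [if_neg h]
    have hz : (fun s => u s m) = fun _ => 0 := by
      funext s
      rcases (by omega : m = 0 ∨ m = 2 * n) with h' | h'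
      · rw [h', hu0]
      · rw [h', hu2n]
    rw [hz]; exact hasDerivAt_const t 0

lemma hderiv_S (n : ℕ) (u : ℝ → ℕ → ℝ)
    (hpos : ∀ t : ℝ, ∀ i ∈ Finset.Icc 1 (2 * n - 1), 0 < u t i)
    (hode : ∀ t : ℝ, ∀ i ∈ Finset.Icc 1 (2 * n - 1),
      HasDerivAt (fun s => u s i) (u t i * (u t (i + 1) - u t (i - 1))) t)
    (t : ℝ) (a : ℕ) (ha : a + 2 ≤ 2 * n - 1) :
    HasDerivAt (fun s => Real.sqrt (u s (a + 1) * u s (a + 2)))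
      (1 / 2 * Real.sqrt (u t (a + 1) * u t (a + 2)) *
        (u t (a + 2) + u t (a + 3) - u t a - u t (a + 1))) t := by
  have hA : 0 < u t (a + 1) := hpos t _ (Finset.mem_Icc.mpr ⟨by omega, by omega⟩)
  have hB : 0 < u t (a + 2) := hpos t _ (Finset.mem_Icc.mpr ⟨by omega, by omega⟩)
  have h1 := hode t (a + 1) (Finset.mem_Icc.mpr ⟨by omega, by omega⟩)
  have h2 := hode t (a + 2) (Finset.mem_Icc.mpr ⟨by omega, by omega⟩)
  have e1 : a + 1 + 1 = a + 2 := rfl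
  have e2 : a + 1 - 1 = a := by omega
  have e3 : a + 2 + 1 = a + 3 := rfl
  have e4 : a + 2 - 1 = a + 1 := by omega
  rw [e1, e2] at h1
  rw [e3, e4] at h2
  have h3 := (h1.mul h2).sqrt (ne_of_gt (mul_pos hA hB))
  convert h3 using 1
  · rfl
  have hr : 0 < Real.sqrt (u t (a + 1) * u t (a + 2)) := Real.sqrt_pos.mpr (mul_pos hA hB)
  rw [eq_div_iff (by positivity)]
  have hs : Real.sqrt (u t (a + 1) * u t (a + 2)) * Real.sqrt (u t (a + 1) * u t (a + 2)) =
      u t (a + 1) * u t (a + 2) := Real.mul_self_sqrt (le_of_lt (mul_pos hA hB))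
  linear_combination (u t (a + 2) + u t (a + 3) - u t a - u t (a + 1)) * hs

lemma kmLaxL_apply (n : ℕ) (v : ℕ → ℝ) (a b : ℕ) (ha : a < 2 * n) (hb : b < 2 * n) :
    kmLaxL n v ⟨a, ha⟩ ⟨b, hb⟩ =
      if a = b then v a + v (a + 1)
      else if b = a + 2 then Real.sqrt (v (a + 1) * v (a + 2))
      else if a = b + 2 then Real.sqrt (v (b + 1) * v (b + 2))
      else 0 := by
  simp only [kmLaxL, Matrix.of_apply, Fin.mk.injEq]

set_option maxHeartbeats 2000000 in
theorem km_lax_equation (n : ℕ) (hn : 0 < n) (u : ℝ → ℕ → ℝ)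
    (hpos : ∀ t : ℝ, ∀ i ∈ Finset.Icc 1 (2 * n - 1), 0 < u t i)
    (hu0 : ∀ t, u t 0 = 0) (hu2n : ∀ t, u t (2 * n) = 0)
    (hode : ∀ t : ℝ, ∀ i ∈ Finset.Icc 1 (2 * n - 1),
      HasDerivAt (fun s => u s i) (u t i * (u t (i + 1) - u t (i - 1))) t) :
    ∀ (t : ℝ) (i j : Fin (2 * n)),
      HasDerivAt (fun s => kmLaxL n (u s) i j)
        ((kmLaxB n (u t) * kmLaxL n (u t) - kmLaxL n (u t) * kmLaxB n (u t)) i j) t := by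
  intro t i j
  rw [Matrix.sub_apply, kmBL, kmLB]
  obtain ⟨m, hm⟩ := i
  obtain ⟨p, hp⟩ := j
  simp only
  have hnn : ∀ a, a ≤ 2 * n → 0 ≤ u t a := by
    intro a ha
    by_cases h : 1 ≤ a ∧ a ≤ 2 * n - 1
    · exact le_of_lt (hpos t a (Finset.mem_Icc.mpr h))
    · rcases (by omega : a = 0 ∨ a = 2 * n) with h' | h'
      · rw [h', hu0]
      · rw [h', hu2n]
  by_cases hd : p = m
  · -- diagonal
    subst hd
    have hL : (fun s => kmLaxL n (u s) ⟨p, hm⟩ ⟨p, hp⟩) = fun s => u s p + u s (p + 1) := by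
      funext s; rw [kmLaxL_apply, if_pos rfl]
    rw [hL]
    have h1 := hderiv_u n u hu0 hu2n hode t p (by omega)
    have h2 := hderiv_u n u hu0 hu2n hode t (p + 1) (by omega)
    refine (h1.add h2).congr_deriv (Eq.symm ?_)
    simp only [kmLaxL_apply]
    split_ifs <;>
      first
      | omega
      | (try rw [show p - 2 + 1 = p - 1 from by omega, show p - 2 + 2 = p from by omega]
         try rw [show p + 1 + 1 = p + 2 from by omega]
         try rw [show p + 1 - 1 = p from by omega]
         try rw [show u t (p - 1) = 0 from by rw [show p - 1 = 0 from by omega]; exact hu0 t]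
         try rw [show u t p = 0 from by rw [show p = 0 from by omega]; exact hu0 t]
         try rw [show u t (p + 1) = 0 from by rw [show p + 1 = 2 * n from by omega]; exact hu2n t]
         try rw [show u t (p + 2) = 0 from by rw [show p + 2 = 2 * n from by omega]; exact hu2n t]
         first
         | ring1
         | linear_combination
             (Real.mul_self_sqrt
               (mul_nonneg (hnn (p + 1) (by omega)) (hnn (p + 2) (by omega)))) -
             (Real.mul_self_sqrt (mul_nonneg (hnn (p - 1) (by omega)) (hnn p (by omega))))
         | linear_combination
             (Real.mul_self_sqrt
               (mul_nonneg (hnn (p + 1) (by omega)) (hnn (p + 2) (by omega))))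
         | linear_combination
             -(Real.mul_self_sqrt (mul_nonneg (hnn (p - 1) (by omega)) (hnn p (by omega)))))
  · by_cases hc : p = m + 2
    · -- superdiagonal: j = i + 2
      subst hc
      have hL : (fun s => kmLaxL n (u s) ⟨m, hm⟩ ⟨m + 2, hp⟩) =
          fun s => Real.sqrt (u s (m + 1) * u s (m + 2)) := by
        funext s
        rw [kmLaxL_apply, if_neg (by omega), if_pos rfl]
      rw [hL]
      convert hderiv_S n u hpos hode t m (by omega) using 1
      simp only [kmLaxL_apply]
      split_ifs <;>
        first
        | omega
        | (try rw [show m + 2 - 2 = m from by omega]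
           try rw [show m + 2 + 1 = m + 3 from by omega]
           try rw [show m + 2 - 1 = m + 1 from by omega]
           ring1)
    · by_cases hc' : m = p + 2
      · -- subdiagonal: i = j + 2
        subst hc'
        have hL : (fun s => kmLaxL n (u s) ⟨p + 2, hm⟩ ⟨p, hp⟩) =
            fun s => Real.sqrt (u s (p + 1) * u s (p + 2)) := by
          funext s
          rw [kmLaxL_apply, if_neg (by omega), if_neg (by omega), if_pos rfl]
        rw [hL]
        convert hderiv_S n u hpos hode t p (by omega) using 1
        simp only [kmLaxL_apply]
        split_ifs <;>
          first
          | omega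
          | (try rw [show p + 2 - 2 = p from by omega]
             try rw [show p + 2 + 1 = p + 3 from by omega]
             try rw [show p + 2 - 1 = p + 1 from by omega]
             try rw [show p + 2 + 2 = p + 4 from by omega]
             ring1)
      · -- far off-diagonal: entry is constantly zero
        have hL : (fun s => kmLaxL n (u s) ⟨m, hm⟩ ⟨p, hp⟩) = fun _ => (0 : ℝ) := by
          funext s
          rw [kmLaxL_apply, if_neg (by omega), if_neg (by omega), if_neg (by omega)]
        rw [hL]
        refine (hasDerivAt_const t (0 : ℝ)).congr_deriv (Eq.symm ?_)
        simp only [kmLaxL_apply]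
        split_ifs <;>
          first
          | omega
          | (try rw [show p = m + 4 from by omega]
             try rw [show m = p + 4 from by omega]
             try rw [show m + 4 - 2 = m + 2 from by omega]
             try rw [show m + 2 + 1 = m + 3 from by omega]
             try rw [show m + 2 + 2 = m + 4 from by omega]
             try rw [show m + 4 - 1 = m + 3 from by omega]
             try rw [show p + 4 - 2 = p + 2 from by omega]
             try rw [show p + 2 + 1 = p + 3 from by omega]
             try rw [show p + 2 + 2 = p + 4 from by omega]
             try rw [show p + 4 - 1 = p + 3 from by omega]
             ring1)
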